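/- Let −1 < p < 0. Let η : ℝ → ℝ³ and η_m : ℝ → ℝ³ (m ∈ ℕ) be continuous 1-periodic maps such that η_m → η uniformly, η is injective on [0, 1), and there exist constants c > 0 and δ ∈ (0, 1/2] such that ‖η_m(u) − η_m(v)‖ ≥ c · d₁(u, v) for all m and all u, v with d₁(u, v) ≤ δ. Then ∫₀^1 ∫₀^1 ‖η_m(u) − η_m(v)‖^p du dv → ∫₀^1 ∫₀^1 ‖η(u) − η(v)‖^p du dv as m → ∞, and both sides are finite. -/

import Mathlib

open MeasureTheory Filter Topology

/-- Circular distance on the parameter circle of circumference `L`: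
`d_L(s, t) = min_{k ∈ ℤ} |s - t + k L|`. -/
noncomputable def circDist (L s t : ℝ) : ℝ := ⨅ k : ℤ, |s - t + k * L|

open Set

abbrev E3 := EuclideanSpace ℝ (Fin 3)

lemma cd_def (u v : ℝ) : circDist 1 u v = ⨅ k : ℤ, |u - v + k| := by
  simp [circDist]

lemma cd_bdd (u v : ℝ) : BddBelow (Set.range fun k : ℤ => |u - v + (k:ℝ)|) :=
  ⟨0, by rintro x ⟨k, rfl⟩; positivity⟩

lemma cd_nonneg (u v : ℝ) : 0 ≤ circDist 1 u v := by
  rw [cd_def]; exact le_ciInf fun k => abs_nonneg _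

lemma cd_le (u v : ℝ) (k : ℤ) : circDist 1 u v ≤ |u - v + k| := by
  rw [cd_def]; exact ciInf_le (cd_bdd u v) k

lemma cd_eq_min (u v : ℝ) (h : |u - v| ≤ 1) :
    circDist 1 u v = min |u - v| (1 - |u - v|) := by
  have hle := abs_le.mp h
  refine le_antisymm (le_min (by simpa using cd_le u v 0) ?_) ?_
  · rcases le_total 0 (u - v) with hx | hx
    · calc circDist 1 u v ≤ |u - v + (-1 : ℤ)| := cd_le u v (-1)
        _ = 1 - |u - v| := by
          rw [abs_of_nonneg hx]; push_cast
          rw [abs_of_nonpos (by linarith)]; ring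
    · calc circDist 1 u v ≤ |u - v + (1 : ℤ)| := cd_le u v 1
        _ = 1 - |u - v| := by
          rw [abs_of_nonpos hx]; push_cast
          rw [abs_of_nonneg (by linarith)]; ring
  · rw [cd_def]
    refine le_ciInf fun k => ?_
    rcases eq_or_ne k 0 with rfl | hk
    · simpa using min_le_left |u - v| (1 - |u - v|)
    · refine min_le_iff.mpr (Or.inr ?_)
      have h1 : (1:ℝ) ≤ |(k:ℝ)| := by exact_mod_cast Int.one_le_abs hk
      have h2 : |(k:ℝ)| ≤ |u - v + k| + |u - v| := by
        calc |(k:ℝ)| = |(u - v + k) - (u - v)| := by ring_nf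
          _ ≤ |u - v + k| + |u - v| := abs_sub _ _
      linarith

lemma cd_eq_abs (u v : ℝ) (h : |u - v| ≤ 1/2) : circDist 1 u v = |u - v| := by
  rw [cd_eq_min u v (by linarith), min_eq_left (by linarith)]

lemma cd_le_add (u v u' v' : ℝ) :
    circDist 1 u v ≤ circDist 1 u' v' + (|u - u'| + |v - v'|) := by
  have h : ∀ k : ℤ, circDist 1 u v - (|u - u'| + |v - v'|) ≤ |u' - v' + k| := by
    intro k
    have h1 := cd_le u v k
    have h2 : |u - v + k| ≤ |u' - v' + k| + (|u - u'| + |v - v'|) := by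
      have e : |u - v + (k:ℝ)| = |(u' - v' + k) + ((u - u') - (v - v'))| := by ring_nf
      rw [e]
      have h3 := abs_add_le (u' - v' + (k:ℝ)) ((u - u') - (v - v'))
      have h4 := abs_sub (u - u') (v - v')
      linarith
    linarith
  have h5 := le_ciInf h
  rw [cd_def u' v'] at *
  linarith

lemma cd_cont : Continuous fun q : ℝ × ℝ => circDist 1 q.1 q.2 := by
  refine LipschitzWith.continuous (K := 2) (LipschitzWith.of_dist_le_mul fun q q' => ?_)
  have h1 := cd_le_add q.1 q.2 q'.1 q'.2
  have h2 := cd_le_add q'.1 q'.2 q.1 q.2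
  have d1 : |q.1 - q'.1| ≤ dist q q' := by
    rw [Prod.dist_eq]; rw [Real.dist_eq] at *; exact le_max_of_le_left (le_refl _) |>.trans (le_refl _)
  have d2 : |q.2 - q'.2| ≤ dist q q' := by
    rw [Prod.dist_eq]; rw [Real.dist_eq] at *; exact le_max_right _ _
  rw [Real.dist_eq, abs_le]
  rw [abs_sub_comm q'.1 q.1, abs_sub_comm q'.2 q.2] at h2
  push_cast
  constructor <;> linarith

lemma cd_zero {u v : ℝ} (hu : u ∈ Set.Icc (0:ℝ) 1) (hv : v ∈ Set.Icc (0:ℝ) 1)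
    (h : circDist 1 u v = 0) : u = v ∨ u = v + 1 ∨ v = u + 1 := by
  have hab : |u - v| ≤ 1 :=
    abs_le.mpr ⟨by linarith [hu.1, hu.2, hv.1, hv.2], by linarith [hu.1, hu.2, hv.1, hv.2]⟩
  have hm := cd_eq_min u v hab
  rw [h] at hm
  rcases min_eq_iff.mp hm.symm with ⟨h1, _⟩ | ⟨h1, _⟩
  · left; have := abs_eq_zero.mp h1; linarith
  · have : |u - v| = 1 := by linarith
    rcases abs_eq (by norm_num : (0:ℝ) ≤ 1) |>.mp this with h2 | h2
    · right; left; linarith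
    · right; right; linarith

lemma periodic_eq {E : Type*} {f : ℝ → E} (hper : ∀ u, f (u + 1) = f u) {u v : ℝ}
    (hu : u ∈ Set.Icc (0:ℝ) 1) (hv : v ∈ Set.Icc (0:ℝ) 1) (hd : circDist 1 u v = 0) :
    f u = f v := by
  rcases cd_zero hu hv hd with rfl | h | h
  · rfl
  · rw [h, hper]
  · rw [h, hper]

lemma oneD_right {p : ℝ} (hp : p ∈ Set.Ioo (-1:ℝ) 0) (a l r : ℝ)
    (hal : a ≤ l) (hlr : l ≤ r) (hr : r ≤ a + 2) :
    IntervalIntegrable (fun v => |v - a| ^ p) volume l r ∧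
      (∫ v in l..r, |v - a| ^ p) ≤ 2 / (p + 1) := by
  have hp1 : 0 < p + 1 := by linarith [hp.1]
  have heq : EqOn (fun v : ℝ => |v - a| ^ p) (fun v : ℝ => (v - a) ^ p) (uIcc l r) := by
    intro v hv
    rw [uIcc_of_le hlr] at hv
    simp only
    rw [abs_of_nonneg (by linarith [hv.1])]
  have hII : IntervalIntegrable (fun v : ℝ => (v - a) ^ p) volume l r := by
    have := (intervalIntegral.intervalIntegrable_rpow' (a := l - a) (b := r - a) hp.1).comp_sub_right a
    simpa using this
  have hII' : IntervalIntegrable (fun v => |v - a| ^ p) volume l r := by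
    rw [intervalIntegrable_iff_integrableOn_Icc_of_le hlr] at hII ⊢
    exact hII.congr_fun (fun v hv => (heq (by rwa [uIcc_of_le hlr])).symm) measurableSet_Icc
  refine ⟨hII', ?_⟩
  rw [intervalIntegral.integral_congr heq]
  rw [intervalIntegral.integral_comp_sub_right (fun x => x ^ p) a]
  rw [integral_rpow (Or.inl hp.1)]
  have h1 : (0:ℝ) ≤ (l - a) ^ (p + 1) := Real.rpow_nonneg (by linarith) _
  have h2 : (r - a) ^ (p + 1) ≤ 2 := by
    calc (r - a) ^ (p + 1) ≤ 2 ^ (p + 1) :=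
          Real.rpow_le_rpow (by linarith) (by linarith) hp1.le
      _ ≤ 2 ^ (1:ℝ) := Real.rpow_le_rpow_of_exponent_le one_le_two (by linarith [hp.2])
      _ = 2 := Real.rpow_one 2
  gcongr
  linarith

lemma oneD_left {p : ℝ} (hp : p ∈ Set.Ioo (-1:ℝ) 0) (a l r : ℝ)
    (hra : r ≤ a) (hlr : l ≤ r) (hl : a - 2 ≤ l) :
    IntervalIntegrable (fun v => |v - a| ^ p) volume l r ∧
      (∫ v in l..r, |v - a| ^ p) ≤ 2 / (p + 1) := by
  obtain ⟨hII, hval⟩ := oneD_right hp a (2*a - r) (2*a - l) (by linarith) (by linarith) (by linarith)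
  have hfun : (fun x : ℝ => |2*a - x - a| ^ p) = fun v : ℝ => |v - a| ^ p := by
    funext x
    rw [show (2*a - x - a) = -(x - a) by ring, abs_neg]
  constructor
  · have := (hII.comp_sub_left (2*a)).symm
    simp only [show 2*a - (2*a - r) = r by ring, show 2*a - (2*a - l) = l by ring] at this
    rwa [hfun] at this
  · have := intervalIntegral.integral_comp_sub_left (fun v => |v - a| ^ p) (2*a) (a := 2*a - r) (b := 2*a - l)
    simp only [show 2*a - (2*a - r) = r by ring, show 2*a - (2*a - l) = l by ring] at this
    rw [hfun] at this
    rw [← this]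
    convert hval using 2 <;> ring

lemma piece_lintegral {p : ℝ} (hp : p ∈ Set.Ioo (-1:ℝ) 0) {a l r : ℝ} (hlr : l ≤ r)
    (hII : IntervalIntegrable (fun v => |v - a| ^ p) volume l r)
    (hval : (∫ v in l..r, |v - a| ^ p) ≤ 2 / (p + 1)) :
    ∫⁻ v in Set.Icc l r, ENNReal.ofReal (|v - a| ^ p) ≤ ENNReal.ofReal (2 / (p + 1)) := by
  have hInt : IntegrableOn (fun v => |v - a| ^ p) (Set.Icc l r) volume :=
    (intervalIntegrable_iff_integrableOn_Icc_of_le hlr).mp hII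
  rw [← ofReal_integral_eq_lintegral_ofReal hInt
    (Filter.Eventually.of_forall fun v => Real.rpow_nonneg (abs_nonneg _) p)]
  apply ENNReal.ofReal_le_ofReal
  rwa [integral_Icc_eq_integral_Ioc, ← intervalIntegral.integral_of_le hlr]

lemma oneD_lintegral {p : ℝ} (hp : p ∈ Set.Ioo (-1:ℝ) 0) (a l r : ℝ)
    (hl : a - 2 ≤ l) (hr : r ≤ a + 2) :
    ∫⁻ v in Set.Icc l r, ENNReal.ofReal (|v - a| ^ p) ≤ ENNReal.ofReal (4 / (p + 1)) := by
  have hp1 : 0 < p + 1 := by linarith [hp.1]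
  rcases le_or_gt l r with hlr | hlr
  swap
  · rw [Set.Icc_eq_empty (not_le.mpr hlr)]
    simp
  have h24 : ENNReal.ofReal (2 / (p+1)) ≤ ENNReal.ofReal (4 / (p+1)) := by
    apply ENNReal.ofReal_le_ofReal; gcongr <;> norm_num
  rcases le_total a l with hal2 | hla
  · obtain ⟨hII, hval⟩ := oneD_right hp a l r hal2 hlr hr
    exact (piece_lintegral hp hlr hII hval).trans h24
  rcases le_total r a with hra | har
  · obtain ⟨hII, hval⟩ := oneD_left hp a l r hra hlr hl
    exact (piece_lintegral hp hlr hII hval).trans h24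
  · -- l ≤ a ≤ r
    obtain ⟨hII1, hval1⟩ := oneD_left hp a l a le_rfl hla hl
    obtain ⟨hII2, hval2⟩ := oneD_right hp a a r le_rfl har hr
    calc ∫⁻ v in Set.Icc l r, ENNReal.ofReal (|v - a| ^ p)
        = ∫⁻ v in Set.Icc l a ∪ Set.Icc a r, ENNReal.ofReal (|v - a| ^ p) := by
          rw [Set.Icc_union_Icc_eq_Icc hla har]
      _ ≤ (∫⁻ v in Set.Icc l a, ENNReal.ofReal (|v - a| ^ p))
            + ∫⁻ v in Set.Icc a r, ENNReal.ofReal (|v - a| ^ p) :=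
          lintegral_union_le _ _ _
      _ ≤ ENNReal.ofReal (2 / (p+1)) + ENNReal.ofReal (2 / (p+1)) :=
          add_le_add (piece_lintegral hp hla hII1 hval1) (piece_lintegral hp har hII2 hval2)
      _ = ENNReal.ofReal (4 / (p+1)) := by
          rw [← ENNReal.ofReal_add (by positivity) (by positivity)]
          congr 1; ring

lemma cell_bound {p c δ : ℝ} (hp : p ∈ Set.Ioo (-1:ℝ) 0) (hc : 0 < c)
    (hδ : δ ∈ Set.Ioc (0:ℝ) (1/2)) (f : ℝ → E3) (hf : Continuous f)
    (hca : ∀ u v : ℝ, circDist 1 u v ≤ δ → c * circDist 1 u v ≤ ‖f u - f v‖)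
    (x : E3) (a b : ℝ) (hab : a ≤ b) (hlen : b - a ≤ δ) :
    ∫⁻ v in Set.Icc a b, ENNReal.ofReal (‖x - f v‖ ^ p) ≤
      ENNReal.ofReal ((c/2) ^ p * (4 / (p + 1))) := by
  obtain ⟨w, hw, hmin⟩ := isCompact_Icc.exists_isMinOn (Set.nonempty_Icc.mpr hab)
    ((continuous_const.sub hf).norm.continuousOn : ContinuousOn (fun v => ‖x - f v‖) _)
  have hmain : ∫⁻ v in Set.Icc a b, ENNReal.ofReal (‖x - f v‖ ^ p) ≤
      ∫⁻ v in Set.Icc a b, ENNReal.ofReal ((c/2) ^ p * |v - w| ^ p) := by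
    apply lintegral_mono_ae
    have hmem : ∀ᵐ v ∂(volume.restrict (Set.Icc a b)), v ∈ Set.Icc a b :=
      ae_restrict_mem measurableSet_Icc
    have hne : ∀ᵐ v ∂(volume.restrict (Set.Icc a b)), v ≠ w := by
      rw [ae_iff]
      refine measure_mono_null (fun v hv => Set.mem_singleton_iff.mpr (not_not.mp hv)) ?_
      exact le_antisymm ((Measure.restrict_apply_le _ _).trans
        (le_of_eq Real.volume_singleton)) (by positivity)
    filter_upwards [hmem, hne] with v hv hvw
    rcases eq_or_ne ‖x - f v‖ 0 with h0 | h0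
    · rw [h0, Real.zero_rpow (ne_of_lt hp.2)]
      simp
    · have hd : 0 < |v - w| := abs_pos.mpr (sub_ne_zero.mpr hvw)
      have hvw2 : |v - w| ≤ δ := by
        rw [abs_le]; constructor <;> linarith [hv.1, hv.2, hw.1, hw.2]
      have hcd : circDist 1 v w = |v - w| := cd_eq_abs v w (by linarith [hδ.2])
      have h1 : c * |v - w| ≤ ‖f v - f w‖ := hcd ▸ hca v w (hcd ▸ hvw2)
      have h2 : ‖f v - f w‖ ≤ ‖x - f w‖ + ‖x - f v‖ := by
        calc ‖f v - f w‖ = ‖(x - f w) - (x - f v)‖ := by rw [sub_sub_sub_cancel_left]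
          _ ≤ ‖x - f w‖ + ‖x - f v‖ := norm_sub_le _ _
      have h3 : ‖x - f w‖ ≤ ‖x - f v‖ := hmin hv
      have h4 : 0 < (c/2) * |v - w| := by positivity
      have h5 : (c/2) * |v - w| ≤ ‖x - f v‖ := by linarith
      have h6 := Real.rpow_le_rpow_of_nonpos h4 h5 hp.2.le
      rw [Real.mul_rpow (by positivity) (abs_nonneg _)] at h6
      exact ENNReal.ofReal_le_ofReal h6
  refine hmain.trans ?_
  have hor : ∀ v : ℝ, ENNReal.ofReal ((c/2) ^ p * |v - w| ^ p)
      = ENNReal.ofReal ((c/2) ^ p) * ENNReal.ofReal (|v - w| ^ p) :=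
    fun v => ENNReal.ofReal_mul (Real.rpow_nonneg (by positivity) _)
  simp only [hor]
  rw [lintegral_const_mul' _ _ ENNReal.ofReal_ne_top]
  calc ENNReal.ofReal ((c/2) ^ p) * ∫⁻ v in Set.Icc a b, ENNReal.ofReal (|v - w| ^ p)
      ≤ ENNReal.ofReal ((c/2) ^ p) * ENNReal.ofReal (4 / (p + 1)) :=
        mul_le_mul_right (oneD_lintegral hp w a b (by linarith [hw.1, hw.2, hδ.2])
          (by linarith [hw.1, hw.2, hδ.2])) _
    _ = ENNReal.ofReal ((c/2) ^ p * (4 / (p + 1))) :=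
        (ENNReal.ofReal_mul (Real.rpow_nonneg (by positivity) _)).symm

lemma cover_Icc01 (N : ℕ) (hN : 0 < N) :
    Set.Icc (0:ℝ) 1 ⊆ ⋃ j : Fin N, Set.Icc ((j:ℝ)/N) (((j:ℝ)+1)/N) := by
  intro v hv
  have hN' : (0:ℝ) < N := by exact_mod_cast hN
  set j0 : ℕ := min (N-1) ⌊v * N⌋₊ with hj0
  have hj0N : j0 < N := by omega
  refine Set.mem_iUnion.mpr ⟨⟨j0, hj0N⟩, ?_, ?_⟩
  · have h1 : (j0 : ℝ) ≤ v * N := by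
      calc (j0 : ℝ) ≤ (⌊v * N⌋₊ : ℝ) := by exact_mod_cast min_le_right _ _
        _ ≤ v * N := Nat.floor_le (mul_nonneg hv.1 hN'.le)
    rw [div_le_iff₀ hN']
    simpa using h1
  · have h2 : v * N ≤ (j0 : ℝ) + 1 := by
      rcases le_or_gt ⌊v * N⌋₊ (N-1) with hcase | hcase
      · have : j0 = ⌊v * N⌋₊ := by omega
        rw [this]
        exact (Nat.lt_floor_add_one (v * N)).le
      · have : j0 = N - 1 := by omega
        rw [this]
        have : ((N - 1 : ℕ) : ℝ) + 1 = (N : ℝ) := by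
          have : (1:ℕ) ≤ N := hN
          push_cast [Nat.cast_sub this]
          ring
        rw [this]
        nlinarith [hv.2]
    rw [le_div_iff₀ hN']
    simpa using h2

lemma inner_bound {p c δ : ℝ} (hp : p ∈ Set.Ioo (-1:ℝ) 0) (hc : 0 < c)
    (hδ : δ ∈ Set.Ioc (0:ℝ) (1/2)) (f : ℝ → E3) (hf : Continuous f)
    (hca : ∀ u v : ℝ, circDist 1 u v ≤ δ → c * circDist 1 u v ≤ ‖f u - f v‖)
    (x : E3) :
    ∫⁻ v in Set.Icc (0:ℝ) 1, ENNReal.ofReal (‖x - f v‖ ^ p) ≤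
      (⌈1/δ⌉₊ : ENNReal) * ENNReal.ofReal ((c/2) ^ p * (4 / (p + 1))) := by
  set N : ℕ := ⌈1/δ⌉₊ with hNdef
  have hN : 0 < N := Nat.ceil_pos.mpr (one_div_pos.mpr hδ.1)
  have hN' : (0:ℝ) < N := by exact_mod_cast hN
  have hcell : ∀ j : Fin N, ((j:ℝ)+1)/N - (j:ℝ)/N ≤ δ := by
    intro j
    have h1 : 1/δ ≤ (N : ℝ) := Nat.le_ceil _
    have : ((j:ℝ)+1)/N - (j:ℝ)/N = 1/N := by ring
    rw [this, div_le_iff₀ hN']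
    rw [div_le_iff₀ hδ.1] at h1
    linarith
  calc ∫⁻ v in Set.Icc (0:ℝ) 1, ENNReal.ofReal (‖x - f v‖ ^ p)
      ≤ ∫⁻ v in ⋃ j : Fin N, Set.Icc ((j:ℝ)/N) (((j:ℝ)+1)/N), ENNReal.ofReal (‖x - f v‖ ^ p) :=
        lintegral_mono_set (cover_Icc01 N hN)
    _ ≤ ∑' j : Fin N, ∫⁻ v in Set.Icc ((j:ℝ)/N) (((j:ℝ)+1)/N), ENNReal.ofReal (‖x - f v‖ ^ p) :=
        lintegral_iUnion_le _ _
    _ ≤ ∑' _j : Fin N, ENNReal.ofReal ((c/2) ^ p * (4 / (p + 1))) := by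
        refine ENNReal.tsum_le_tsum fun j => ?_
        refine cell_bound hp hc hδ f hf hca x _ _ ?_ (hcell j)
        · gcongr
          linarith
    _ = (N : ENNReal) * ENNReal.ofReal ((c/2) ^ p * (4 / (p + 1))) := by
        rw [tsum_fintype]
        simp [Finset.sum_const, Finset.card_univ]

lemma square_hfi {p : ℝ} (f : ℝ → E3) (hf : Continuous f) (B : ENNReal) (hB : B ≠ ⊤)
    (hin : ∀ x : E3, ∫⁻ v in Set.Icc (0:ℝ) 1, ENNReal.ofReal (‖x - f v‖ ^ p) ≤ B) :
    IntegrableOn (fun q : ℝ × ℝ => ‖f q.1 - f q.2‖ ^ p)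
      (Set.Icc 0 1 ×ˢ Set.Icc 0 1) volume := by
  have hmeas : Measurable fun q : ℝ × ℝ => ‖f q.1 - f q.2‖ ^ p := by fun_prop
  refine ⟨hmeas.aestronglyMeasurable, ?_⟩
  rw [hasFiniteIntegral_iff_norm]
  have hnn : ∀ q : ℝ × ℝ, ENNReal.ofReal ‖‖f q.1 - f q.2‖ ^ p‖
      = ENNReal.ofReal (‖f q.1 - f q.2‖ ^ p) := fun q => by
    rw [Real.norm_of_nonneg (Real.rpow_nonneg (norm_nonneg _) p)]
  simp only [hnn]
  have hSm : (volume : Measure (ℝ × ℝ)).restrict (Set.Icc 0 1 ×ˢ Set.Icc 0 1)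
      = ((volume : Measure ℝ).restrict (Set.Icc 0 1)).prod
        ((volume : Measure ℝ).restrict (Set.Icc 0 1)) := by
    rw [Measure.prod_restrict, ← Measure.volume_eq_prod]
  rw [hSm, lintegral_prod _ (by fun_prop : Measurable fun q : ℝ × ℝ =>
    ENNReal.ofReal (‖f q.1 - f q.2‖ ^ p)).aemeasurable]
  calc ∫⁻ u in Set.Icc (0:ℝ) 1, ∫⁻ v in Set.Icc (0:ℝ) 1, ENNReal.ofReal (‖f u - f v‖ ^ p)
      ≤ ∫⁻ _u in Set.Icc (0:ℝ) 1, B := lintegral_mono fun u => hin (f u)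
    _ = B * volume (Set.Icc (0:ℝ) 1) := setLIntegral_const _ _
    _ < ⊤ := by
        rw [Real.volume_Icc]
        exact ENNReal.mul_lt_top hB.lt_top (by norm_num)

lemma min_rpow_bound {p : ℝ} (hp : p ∈ Set.Ioo (-1:ℝ) 0) {u v : ℝ}
    (hu : u ∈ Set.Icc (0:ℝ) 1) (hv : v ∈ Set.Icc (0:ℝ) 1) :
    (min |u - v| (1 - |u - v|)) ^ p ≤ |v - u| ^ p + |v - (u-1)| ^ p + |v - (u+1)| ^ p := by
  have n1 : (0:ℝ) ≤ |v - u| ^ p := Real.rpow_nonneg (abs_nonneg _) _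
  have n2 : (0:ℝ) ≤ |v - (u-1)| ^ p := Real.rpow_nonneg (abs_nonneg _) _
  have n3 : (0:ℝ) ≤ |v - (u+1)| ^ p := Real.rpow_nonneg (abs_nonneg _) _
  rcases min_cases |u - v| (1 - |u - v|) with ⟨hm, _⟩ | ⟨hm, _⟩
  · rw [hm, abs_sub_comm]; linarith
  · rw [hm]
    rcases le_total v u with hvu | hvu
    · have he : 1 - |u - v| = |v - (u - 1)| := by
        rw [abs_of_nonneg (by linarith), abs_of_nonneg (by linarith [hu.2, hv.1])]
        ring
      rw [he]; linarith
    · have he : 1 - |u - v| = |v - (u + 1)| := by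
        rw [abs_of_nonpos (by linarith), abs_of_nonpos (by linarith [hu.1, hv.2])]
        ring
      rw [he]; linarith

lemma g_inner_bound {p c : ℝ} (hp : p ∈ Set.Ioo (-1:ℝ) 0) (hc : 0 < c)
    {u : ℝ} (hu : u ∈ Set.Icc (0:ℝ) 1) :
    ∫⁻ v in Set.Icc (0:ℝ) 1, ENNReal.ofReal ((c * circDist 1 u v) ^ p)
      ≤ ENNReal.ofReal (c ^ p) * (3 * ENNReal.ofReal (4 / (p + 1))) := by
  have step1 : ∫⁻ v in Set.Icc (0:ℝ) 1, ENNReal.ofReal ((c * circDist 1 u v) ^ p)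
      ≤ ∫⁻ v in Set.Icc (0:ℝ) 1, ENNReal.ofReal (c ^ p) *
          (ENNReal.ofReal (|v - u| ^ p) + ENNReal.ofReal (|v - (u-1)| ^ p)
            + ENNReal.ofReal (|v - (u+1)| ^ p)) := by
    refine setLIntegral_mono (by fun_prop) fun v hv => ?_
    have hab : |u - v| ≤ 1 := by
      rw [abs_le]
      constructor <;> [linarith [hu.1, hv.2]; linarith [hu.2, hv.1]]
    rw [Real.mul_rpow hc.le (cd_nonneg u v),
      ENNReal.ofReal_mul (Real.rpow_nonneg hc.le _)]
    refine mul_le_mul_right ?_ _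
    rw [cd_eq_min u v hab]
    calc ENNReal.ofReal ((min |u - v| (1 - |u - v|)) ^ p)
        ≤ ENNReal.ofReal (|v - u| ^ p + |v - (u-1)| ^ p + |v - (u+1)| ^ p) :=
          ENNReal.ofReal_le_ofReal (min_rpow_bound hp hu hv)
      _ = _ := by
          rw [ENNReal.ofReal_add (by positivity) (Real.rpow_nonneg (abs_nonneg _) _),
            ENNReal.ofReal_add (Real.rpow_nonneg (abs_nonneg _) _)
              (Real.rpow_nonneg (abs_nonneg _) _)]
  refine step1.trans ?_
  rw [lintegral_const_mul' _ _ ENNReal.ofReal_ne_top]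
  refine mul_le_mul_right ?_ _
  rw [lintegral_add_left (by fun_prop), lintegral_add_left (by fun_prop)]
  have b1 := oneD_lintegral hp u 0 1 (by linarith [hu.2]) (by linarith [hu.1])
  have b2 := oneD_lintegral hp (u-1) 0 1 (by linarith [hu.2]) (by linarith [hu.1])
  have b3 := oneD_lintegral hp (u+1) 0 1 (by linarith [hu.2]) (by linarith [hu.1])
  calc _ ≤ ENNReal.ofReal (4/(p+1)) + ENNReal.ofReal (4/(p+1)) + ENNReal.ofReal (4/(p+1)) :=
        add_le_add (add_le_add b1 b2) b3
    _ = 3 * ENNReal.ofReal (4/(p+1)) := by ring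

lemma g_integrable {p c : ℝ} (hp : p ∈ Set.Ioo (-1:ℝ) 0) (hc : 0 < c) (e : ℝ) :
    Integrable (fun q : ℝ × ℝ => (c * circDist 1 q.1 q.2) ^ p + e)
      ((volume : Measure (ℝ × ℝ)).restrict (Set.Icc 0 1 ×ˢ Set.Icc 0 1)) := by
  have hvolS : (volume : Measure (ℝ × ℝ)) (Set.Icc 0 1 ×ˢ Set.Icc 0 1) < ⊤ := by
    rw [Measure.volume_eq_prod, Measure.prod_prod, Real.volume_Icc]
    norm_num
  have hDmeas : Measurable fun q : ℝ × ℝ => c * circDist 1 q.1 q.2 :=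
    (continuous_const.mul cd_cont).measurable
  have hmeas : Measurable fun q : ℝ × ℝ => (c * circDist 1 q.1 q.2) ^ p := by fun_prop
  refine Integrable.add ?_ (integrableOn_const (C := e) hvolS.ne)
  refine ⟨hmeas.aestronglyMeasurable, ?_⟩
  rw [hasFiniteIntegral_iff_norm]
  have hnn : ∀ q : ℝ × ℝ, ENNReal.ofReal ‖(c * circDist 1 q.1 q.2) ^ p‖
      = ENNReal.ofReal ((c * circDist 1 q.1 q.2) ^ p) := fun q => by
    rw [Real.norm_of_nonneg (Real.rpow_nonneg (mul_nonneg hc.le (cd_nonneg _ _)) p)]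
  simp only [hnn]
  have hSm : (volume : Measure (ℝ × ℝ)).restrict (Set.Icc 0 1 ×ˢ Set.Icc 0 1)
      = ((volume : Measure ℝ).restrict (Set.Icc 0 1)).prod
        ((volume : Measure ℝ).restrict (Set.Icc 0 1)) := by
    rw [Measure.prod_restrict, ← Measure.volume_eq_prod]
  rw [hSm, lintegral_prod _ (by fun_prop : Measurable fun q : ℝ × ℝ =>
    ENNReal.ofReal ((c * circDist 1 q.1 q.2) ^ p)).aemeasurable]
  have hmem : ∀ᵐ u ∂((volume : Measure ℝ).restrict (Set.Icc 0 1)), u ∈ Set.Icc (0:ℝ) 1 :=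
    ae_restrict_mem measurableSet_Icc
  calc ∫⁻ u in Set.Icc (0:ℝ) 1, ∫⁻ v in Set.Icc (0:ℝ) 1,
        ENNReal.ofReal ((c * circDist 1 u v) ^ p)
      ≤ ∫⁻ _u in Set.Icc (0:ℝ) 1,
          ENNReal.ofReal (c ^ p) * (3 * ENNReal.ofReal (4 / (p + 1))) := by
        refine lintegral_mono_ae (hmem.mono fun u hu => ?_)
        exact g_inner_bound hp hc hu
    _ = ENNReal.ofReal (c ^ p) * (3 * ENNReal.ofReal (4 / (p + 1)))
          * volume (Set.Icc (0:ℝ) 1) := setLIntegral_const _ _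
    _ < ⊤ := by
        rw [Real.volume_Icc]
        refine ENNReal.mul_lt_top (ENNReal.mul_lt_top ENNReal.ofReal_lt_top ?_) (by norm_num)
        exact ENNReal.mul_lt_top (by norm_num) ENNReal.ofReal_lt_top

lemma eps_pos {δ : ℝ} (hδ : δ ∈ Set.Ioc (0:ℝ) (1/2)) (η : ℝ → E3) (hη : Continuous η)
    (hperη : ∀ u, η (u + 1) = η u) (hinj : Set.InjOn η (Set.Ico 0 1)) :
    ∃ ε > 0, ∀ u v : ℝ, u ∈ Set.Icc (0:ℝ) 1 → v ∈ Set.Icc (0:ℝ) 1 →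
      δ ≤ circDist 1 u v → ε ≤ ‖η u - η v‖ := by
  have h10 : η 1 = η 0 := by simpa using hperη 0
  set K : Set (ℝ × ℝ) := (Set.Icc 0 1 ×ˢ Set.Icc 0 1) ∩ {q | δ ≤ circDist 1 q.1 q.2} with hK
  have hKc : IsCompact K := (isCompact_Icc.prod isCompact_Icc).inter_right
      (isClosed_le continuous_const cd_cont)
  have hKne : K.Nonempty := by
    refine ⟨(0, 1/2), ⟨⟨⟨le_rfl, by norm_num⟩, ⟨by norm_num, by norm_num⟩⟩, ?_⟩⟩
    have habs : |(0:ℝ) - 1/2| = 1/2 := by rw [abs_sub_comm]; rw [abs_of_nonneg] <;> norm_num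
    have : circDist 1 (0:ℝ) (1/2) = |(0:ℝ) - 1/2| := cd_eq_abs 0 (1/2) (le_of_eq habs)
    simp only [Set.mem_setOf_eq, this, habs]
    exact hδ.2
  obtain ⟨q0, hq0K, hminK⟩ := hKc.exists_isMinOn hKne
    (((hη.comp continuous_fst).sub (hη.comp continuous_snd)).norm.continuousOn :
      ContinuousOn (fun q : ℝ × ℝ => ‖η q.1 - η q.2‖) _)
  refine ⟨‖η q0.1 - η q0.2‖, ?_, fun u v hu hv hd => isMinOn_iff.mp hminK (u, v) ⟨⟨hu, hv⟩, hd⟩⟩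
  refine lt_of_le_of_ne (norm_nonneg _) (fun h0 => ?_)
  have heq : η q0.1 = η q0.2 := sub_eq_zero.mp (norm_eq_zero.mp h0.symm)
  obtain ⟨⟨hu, hv⟩, hdK⟩ := hq0K
  have hd0 : (0:ℝ) < circDist 1 q0.1 q0.2 := lt_of_lt_of_le hδ.1 hdK
  have key : ∀ w : ℝ, w ∈ Set.Icc (0:ℝ) 1 →
      ∃ w', w' ∈ Set.Ico (0:ℝ) 1 ∧ η w' = η w ∧ (w' = w ∨ (w = 1 ∧ w' = 0)) := by
    intro w hw
    rcases eq_or_lt_of_le hw.2 with h1 | h1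
    · exact ⟨0, ⟨le_rfl, one_pos⟩, by rw [h1]; exact h10.symm, Or.inr ⟨h1, rfl⟩⟩
    · exact ⟨w, ⟨hw.1, h1⟩, rfl, Or.inl rfl⟩
  obtain ⟨u', hu', hηu, hcu⟩ := key q0.1 hu
  obtain ⟨v', hv', hηv, hcv⟩ := key q0.2 hv
  have huv : u' = v' := hinj hu' hv' (by rw [hηu, hηv, heq])
  have cd01 : circDist 1 (0:ℝ) 1 = 0 := by
    rw [cd_eq_min 0 1 (by norm_num)]; norm_num
  have cd10 : circDist 1 (1:ℝ) 0 = 0 := by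
    rw [cd_eq_min 1 0 (by norm_num)]; norm_num
  have cdz : ∀ a : ℝ, circDist 1 a a = 0 := fun a => by
    rw [cd_eq_abs a a (by simp), sub_self, abs_zero]
  have hzero : circDist 1 q0.1 q0.2 = 0 := by
    rcases hcu with rfl | ⟨h1u, h0u⟩ <;> rcases hcv with rfl | ⟨h1v, h0v⟩
    · rw [huv]; exact cdz _
    · rw [h1v, show q0.1 = (0:ℝ) from huv.trans h0v]; exact cd01
    · rw [h1u, show q0.2 = (0:ℝ) from huv.symm.trans h0u]; exact cd10
    · rw [h1u, h1v]; exact cdz _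
  linarith

lemma iter_eq {p : ℝ} (f : ℝ → E3)
    (h : IntegrableOn (fun q : ℝ × ℝ => ‖f q.1 - f q.2‖ ^ p)
      (Set.Icc 0 1 ×ˢ Set.Icc 0 1) volume) :
    (∫ q in Set.Icc 0 1 ×ˢ Set.Icc 0 1, ‖f q.1 - f q.2‖ ^ p)
      = ∫ u in (0:ℝ)..1, ∫ v in (0:ℝ)..1, ‖f u - f v‖ ^ p := by
  have h1 : ∀ u : ℝ, (∫ v in (0:ℝ)..1, ‖f u - f v‖ ^ p)
      = ∫ v in Set.Icc (0:ℝ) 1, ‖f u - f v‖ ^ p := fun u => by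
    rw [intervalIntegral.integral_of_le zero_le_one, integral_Icc_eq_integral_Ioc]
  rw [intervalIntegral.integral_of_le zero_le_one]
  simp only [h1]
  rw [← integral_Icc_eq_integral_Ioc]
  have hSm : (volume : Measure (ℝ × ℝ)).restrict (Set.Icc 0 1 ×ˢ Set.Icc 0 1)
      = ((volume : Measure ℝ).restrict (Set.Icc 0 1)).prod
        ((volume : Measure ℝ).restrict (Set.Icc 0 1)) := by
    rw [Measure.prod_restrict, ← Measure.volume_eq_prod]
  have h' : Integrable (Function.uncurry fun u v : ℝ => ‖f u - f v‖ ^ p)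
      (((volume : Measure ℝ).restrict (Set.Icc 0 1)).prod
        ((volume : Measure ℝ).restrict (Set.Icc 0 1))) := by
    rw [← hSm]
    exact h
  have := MeasureTheory.integral_integral h'
  rw [this]
  show (∫ q, ‖f q.1 - f q.2‖ ^ p ∂((volume : Measure (ℝ × ℝ)).restrict _)) = _
  rw [hSm]

theorem negative_power_chord_integral_continuity
    (p : ℝ) (hp : p ∈ Set.Ioo (-1 : ℝ) 0)
    (η : ℝ → EuclideanSpace ℝ (Fin 3)) (ηm : ℕ → ℝ → EuclideanSpace ℝ (Fin 3))
    (hη : Continuous η) (hηm : ∀ m, Continuous (ηm m))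
    (hperη : ∀ u, η (u + 1) = η u) (hperηm : ∀ m u, ηm m (u + 1) = ηm m u)
    (hconv : TendstoUniformly ηm η atTop)
    (hinj : Set.InjOn η (Set.Ico 0 1))
    (c δ : ℝ) (hc : 0 < c) (hδ : δ ∈ Set.Ioc (0:ℝ) (1/2))
    (hchordarc : ∀ m, ∀ u v : ℝ, circDist 1 u v ≤ δ →
      c * circDist 1 u v ≤ ‖ηm m u - ηm m v‖) :
    (∀ m, IntegrableOn (fun q : ℝ × ℝ => ‖ηm m q.1 - ηm m q.2‖ ^ p)
        (Set.Icc 0 1 ×ˢ Set.Icc 0 1) volume) ∧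
      IntegrableOn (fun q : ℝ × ℝ => ‖η q.1 - η q.2‖ ^ p)
        (Set.Icc 0 1 ×ˢ Set.Icc 0 1) volume ∧
      Tendsto (fun m => ∫ u in (0:ℝ)..1, ∫ v in (0:ℝ)..1, ‖ηm m u - ηm m v‖ ^ p)
        atTop (𝓝 (∫ u in (0:ℝ)..1, ∫ v in (0:ℝ)..1, ‖η u - η v‖ ^ p)) := by
  have hcaη : ∀ u v : ℝ, circDist 1 u v ≤ δ → c * circDist 1 u v ≤ ‖η u - η v‖ := by
    intro u v h
    have ht : Tendsto (fun m => ‖ηm m u - ηm m v‖) atTop (𝓝 ‖η u - η v‖) :=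
      ((hconv.tendsto_at u).sub (hconv.tendsto_at v)).norm
    exact ge_of_tendsto ht (Filter.Eventually.of_forall fun m => hchordarc m u v h)
  set B : ENNReal := (⌈1/δ⌉₊ : ENNReal) * ENNReal.ofReal ((c/2) ^ p * (4 / (p + 1)))
    with hBdef
  have hBne : B ≠ ⊤ := ENNReal.mul_ne_top (ENNReal.natCast_ne_top _) ENNReal.ofReal_ne_top
  have int_m : ∀ m, IntegrableOn (fun q : ℝ × ℝ => ‖ηm m q.1 - ηm m q.2‖ ^ p)
      (Set.Icc 0 1 ×ˢ Set.Icc 0 1) volume := fun m =>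
    square_hfi (ηm m) (hηm m) B hBne
      (fun x => inner_bound hp hc hδ (ηm m) (hηm m) (hchordarc m) x)
  have int_η : IntegrableOn (fun q : ℝ × ℝ => ‖η q.1 - η q.2‖ ^ p)
      (Set.Icc 0 1 ×ˢ Set.Icc 0 1) volume :=
    square_hfi η hη B hBne (fun x => inner_bound hp hc hδ η hη hcaη x)
  refine ⟨int_m, int_η, ?_⟩
  obtain ⟨ε, hε, hKb⟩ := eps_pos hδ η hη hperη hinj
  have hεm : ∀ᶠ m in atTop, ∀ x, dist (η x) (ηm m x) < ε/4 :=
    Metric.tendstoUniformly_iff.mp hconv (ε/4) (by positivity)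
  have hSmeas : MeasurableSet (Set.Icc 0 1 ×ˢ Set.Icc 0 1 : Set (ℝ × ℝ)) :=
    measurableSet_Icc.prod measurableSet_Icc
  have hqmem : ∀ᵐ q ∂((volume : Measure (ℝ × ℝ)).restrict (Set.Icc 0 1 ×ˢ Set.Icc 0 1)),
      q ∈ (Set.Icc 0 1 ×ˢ Set.Icc 0 1 : Set (ℝ × ℝ)) := ae_restrict_mem hSmeas
  have hFmeas : ∀ m, Measurable fun q : ℝ × ℝ => ‖ηm m q.1 - ηm m q.2‖ ^ p := fun m => by
    have := hηm m; fun_prop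
  have hF : Tendsto (fun m => ∫ q in (Set.Icc 0 1 ×ˢ Set.Icc 0 1 : Set (ℝ × ℝ)),
        ‖ηm m q.1 - ηm m q.2‖ ^ p) atTop
      (𝓝 (∫ q in (Set.Icc 0 1 ×ˢ Set.Icc 0 1 : Set (ℝ × ℝ)), ‖η q.1 - η q.2‖ ^ p)) := by
    refine tendsto_integral_filter_of_dominated_convergence
      (fun q : ℝ × ℝ => (c * circDist 1 q.1 q.2) ^ p + (ε/2) ^ p)
      (Filter.Eventually.of_forall fun m => (hFmeas m).aestronglyMeasurable)
      ?_ (g_integrable hp hc _) ?_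
    · filter_upwards [hεm] with m hm
      filter_upwards [hqmem] with q hq
      obtain ⟨hu, hv⟩ := hq
      rw [Real.norm_of_nonneg (Real.rpow_nonneg (norm_nonneg _) _)]
      have hg0 : 0 ≤ (ε/2 : ℝ) ^ p := Real.rpow_nonneg (by positivity) _
      have hg1 : 0 ≤ (c * circDist 1 q.1 q.2) ^ p :=
        Real.rpow_nonneg (mul_nonneg hc.le (cd_nonneg _ _)) _
      by_cases hdδ : circDist 1 q.1 q.2 ≤ δ
      · rcases eq_or_lt_of_le (cd_nonneg q.1 q.2) with h0 | h0
        · have hz : ηm m q.1 = ηm m q.2 := periodic_eq (hperηm m) hu hv h0.symm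
          rw [hz, sub_self, norm_zero, Real.zero_rpow (ne_of_lt hp.2)]
          linarith
        · have hca := hchordarc m q.1 q.2 hdδ
          have hle : ‖ηm m q.1 - ηm m q.2‖ ^ p ≤ (c * circDist 1 q.1 q.2) ^ p :=
            Real.rpow_le_rpow_of_nonpos (by positivity) hca hp.2.le
          linarith
      · push_neg at hdδ
        have h1 := hKb q.1 q.2 hu hv hdδ.le
        have e1 : dist (η q.1) (ηm m q.1) < ε/4 := hm q.1
        have e2 : dist (ηm m q.2) (η q.2) < ε/4 := by rw [dist_comm]; exact hm q.2
        have e3 : ε ≤ dist (η q.1) (η q.2) := by rw [dist_eq_norm]; exact h1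
        have e4 : dist (ηm m q.1) (ηm m q.2) = ‖ηm m q.1 - ηm m q.2‖ := dist_eq_norm _ _
        have t4 := dist_triangle4 (η q.1) (ηm m q.1) (ηm m q.2) (η q.2)
        have h2 : ε/2 ≤ ‖ηm m q.1 - ηm m q.2‖ := by linarith
        have hle : ‖ηm m q.1 - ηm m q.2‖ ^ p ≤ (ε/2) ^ p :=
          Real.rpow_le_rpow_of_nonpos (by positivity) h2 hp.2.le
        linarith
    · filter_upwards [hqmem] with q hq
      obtain ⟨hu, hv⟩ := hq
      rcases eq_or_lt_of_le (cd_nonneg q.1 q.2) with h0 | h0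
      · have hz : ∀ m, ‖ηm m q.1 - ηm m q.2‖ ^ p = 0 := fun m => by
          rw [periodic_eq (hperηm m) hu hv h0.symm, sub_self, norm_zero,
            Real.zero_rpow (ne_of_lt hp.2)]
        have hz' : ‖η q.1 - η q.2‖ ^ p = 0 := by
          rw [periodic_eq hperη hu hv h0.symm, sub_self, norm_zero,
            Real.zero_rpow (ne_of_lt hp.2)]
        simp only [hz, hz']
        exact tendsto_const_nhds
      · have hne : ‖η q.1 - η q.2‖ ≠ 0 := by
          by_cases hdδ : circDist 1 q.1 q.2 ≤ δ
          · refine ne_of_gt (lt_of_lt_of_le ?_ (hcaη q.1 q.2 hdδ))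
            positivity
          · push_neg at hdδ
            exact ne_of_gt (lt_of_lt_of_le hε (hKb q.1 q.2 hu hv hdδ.le))
        have hnorm : Tendsto (fun m => ‖ηm m q.1 - ηm m q.2‖) atTop
            (𝓝 ‖η q.1 - η q.2‖) :=
          ((hconv.tendsto_at q.1).sub (hconv.tendsto_at q.2)).norm
        exact (Real.continuousAt_rpow_const _ p (Or.inl hne)).tendsto.comp hnorm
  have goal_eq : (fun m => ∫ u in (0:ℝ)..1, ∫ v in (0:ℝ)..1, ‖ηm m u - ηm m v‖ ^ p)
      = fun m => ∫ q in (Set.Icc 0 1 ×ˢ Set.Icc 0 1 : Set (ℝ × ℝ)),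
          ‖ηm m q.1 - ηm m q.2‖ ^ p :=
    funext fun m => (iter_eq (ηm m) (int_m m)).symm
  rw [goal_eq, ← iter_eq η int_η]
  exact hF
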